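/- With the setup of the previous statement, for each fixed α ∈ (-1,1)\{0}, the functions b_{n+1}(z) converge locally uniformly on the open unit disk, as n → ∞, to b(z) = -2α/(r(z)+1-z). -/

import Mathlib

noncomputable def geronimusPhi (α : ℂ) : ℕ → (ℂ → ℂ) × (ℂ → ℂ)
  | 0 => (fun _ => 1, fun _ => 1)
  | m + 1 =>
      (fun z => z * (geronimusPhi α m).1 z - α * (geronimusPhi α m).2 z,
       fun z => (geronimusPhi α m).2 z - α * z * (geronimusPhi α m).1 z)

noncomputable def Complex.abs : AbsoluteValue ℂ ℝ :=
  IsAbsoluteValue.toAbsoluteValue (norm : ℂ → ℝ)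

theorem Complex.abs_apply (z : ℂ) : Complex.abs z = ‖z‖ := rfl

theorem Complex.norm_eq_abs (z : ℂ) : ‖z‖ = Complex.abs z := rfl

theorem Complex.sq_abs (z : ℂ) : Complex.abs z ^ 2 = Complex.normSq z := Complex.sq_norm z

theorem Complex.continuous_abs : Continuous Complex.abs := continuous_norm

lemma quad_ne (b : ℝ) (hb : |b| < 2) (z : ℂ) (hz : Complex.abs z < 1) :
    z ^ 2 + (b : ℂ) * z + 1 ≠ 0 := by
  intro h
  have hconj : (starRingEnd ℂ) z ^ 2 + (b : ℂ) * (starRingEnd ℂ) z + 1 = 0 := by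
    have := congrArg (starRingEnd ℂ) h
    simpa using this
  by_cases hzz : z = (starRingEnd ℂ) z
  · have him : z.im = 0 := Complex.conj_eq_iff_im.mp hzz.symm
    have hre : z.re ^ 2 + b * z.re + 1 = 0 := by
      have := congrArg Complex.re h
      simp [Complex.add_re, Complex.mul_re, Complex.ofReal_re, Complex.ofReal_im,
        pow_two, him] at this
      nlinarith [this]
    have := abs_lt.mp hb
    nlinarith [sq_nonneg (2 * z.re + b)]
  · have h3 : (z - (starRingEnd ℂ) z) * (z + (starRingEnd ℂ) z + b) = 0 := by
      linear_combination h - hconj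
    rcases mul_eq_zero.mp h3 with h4 | h4
    · exact hzz (sub_eq_zero.mp h4)
    · have hsum : z + (starRingEnd ℂ) z = -(b : ℂ) := by linear_combination h4
      have hmul : z * (starRingEnd ℂ) z = 1 := by linear_combination z * hsum - h
      rw [Complex.mul_conj] at hmul
      have hn : Complex.normSq z = 1 := by exact_mod_cast hmul
      have h5 := Complex.sq_abs z
      nlinarith [Complex.abs.nonneg z]

lemma abs_sub_lt_abs_add (a c : ℂ) (ha : a ≠ 0) (h : 0 < (c / a).re) :
    Complex.abs (a - c) < Complex.abs (a + c) := by
  have hc : c = a * (c / a) := by field_simp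
  rw [show a - c = a * (1 - c / a) by rw [mul_sub, mul_one, ← hc],
      show a + c = a * (1 + c / a) by rw [mul_add, mul_one, ← hc],
      map_mul, map_mul]
  have ha' : 0 < Complex.abs a := by simpa [Complex.abs.pos_iff] using ha
  apply mul_lt_mul_of_pos_left _ ha'
  apply lt_of_pow_lt_pow_left₀ 2 (Complex.abs.nonneg _)
  rw [Complex.sq_abs, Complex.sq_abs]
  simp [Complex.normSq_apply, Complex.add_re, Complex.sub_re, Complex.add_im, Complex.sub_im]
  nlinarith [h]

noncomputable def gerA (a : ℂ) (r : ℂ → ℂ) (z : ℂ) : ℂ := r z + z - 1 - 2 * a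
noncomputable def gerB (a : ℂ) (r : ℂ → ℂ) (z : ℂ) : ℂ := r z - z + 1 + 2 * a
noncomputable def gerC (a : ℂ) (r : ℂ → ℂ) (z : ℂ) : ℂ := r z + 1 - z - 2 * a * z
noncomputable def gerD (a : ℂ) (r : ℂ → ℂ) (z : ℂ) : ℂ := r z - 1 + z + 2 * a * z
noncomputable def gerEps (r : ℂ → ℂ) (z : ℂ) : ℂ := ((z + 1 - r z) / 2) / ((z + 1 + r z) / 2)

lemma geronimus_closed (a : ℂ) (r : ℂ → ℂ) (z : ℂ)
    (hr2 : (r z) ^ 2 = (z - 1) ^ 2 + 4 * a ^ 2 * z) (m : ℕ) :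
    2 * r z * (geronimusPhi a m).1 z
        = gerA a r z * ((z + 1 + r z) / 2) ^ m + gerB a r z * ((z + 1 - r z) / 2) ^ m ∧
    2 * r z * (geronimusPhi a m).2 z
        = gerC a r z * ((z + 1 + r z) / 2) ^ m + gerD a r z * ((z + 1 - r z) / 2) ^ m := by
  unfold gerA gerB gerC gerD
  induction m with
  | zero => constructor <;> · show 2 * r z * 1 = _; ring
  | succ m ih =>
    obtain ⟨ih1, ih2⟩ := ih
    constructor
    · show 2 * r z * (z * (geronimusPhi a m).1 z - a * (geronimusPhi a m).2 z) = _
      linear_combination z * ih1 - a * ih2 +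
        ((((z + 1 - r z) / 2) ^ m - ((z + 1 + r z) / 2) ^ m) / 2) * hr2
    · show 2 * r z * ((geronimusPhi a m).2 z - a * z * (geronimusPhi a m).1 z) = _
      linear_combination ih2 - a * z * ih1 +
        ((((z + 1 - r z) / 2) ^ m - ((z + 1 + r z) / 2) ^ m) / 2) * hr2

theorem stmt_12 (α : ℝ) (hα : α ∈ Set.Ioo (-1 : ℝ) 1) (hα0 : α ≠ 0) (r : ℂ → ℂ)
    (hr_cont : ContinuousOn r (Metric.ball (0 : ℂ) 1))
    (hr_sq : ∀ z ∈ Metric.ball (0 : ℂ) 1, (r z) ^ 2 = (z - 1) ^ 2 + 4 * (α : ℂ) ^ 2 * z)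
    (hr0 : r 0 = 1) :
    TendstoLocallyUniformlyOn
      (fun (n : ℕ) (z : ℂ) =>
        (geronimusPhi (α : ℂ) (n + 1)).1 z / (geronimusPhi (α : ℂ) (n + 1)).2 z)
      (fun z => -2 * (α : ℂ) / (r z + 1 - z)) Filter.atTop (Metric.ball (0 : ℂ) 1) := by
  obtain ⟨hαm, hαp⟩ := hα
  have hα2 : 0 < α ^ 2 := by nlinarith [sq_abs α, abs_pos.mpr hα0]
  have ha0 : (α : ℂ) ≠ 0 := Complex.ofReal_ne_zero.mpr hα0
  set S := Metric.ball (0 : ℂ) 1 with hS_def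
  have habs : ∀ z ∈ S, Complex.abs z < 1 := by
    intro z hz
    simpa [Complex.norm_eq_abs] using mem_ball_zero_iff.mp hz
  -- r never vanishes on S
  have hrne : ∀ z ∈ S, r z ≠ 0 := by
    intro z hz h0
    refine quad_ne (4 * α ^ 2 - 2) ?_ z (habs z hz) ?_
    · rw [abs_lt]; constructor <;> nlinarith
    · have h := hr_sq z hz
      rw [h0] at h
      push_cast
      linear_combination -h
  -- z ≠ -1 on S
  have hz1 : ∀ z ∈ S, z + 1 ≠ 0 := by
    intro z hz h0
    have : z = -1 := by linear_combination h0
    rw [this] at hz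
    have := habs _ hz
    simp at this
  -- Re (r z / (z+1)) never vanishes on S
  have hgne : ∀ z ∈ S, (r z / (z + 1)).re ≠ 0 := by
    intro z hz h0
    set u : ℂ := r z / (z + 1) with hu_def
    have hu : r z = u * (z + 1) := by rw [hu_def, div_mul_cancel₀ _ (hz1 z hz)]
    have huI : u = (u.im : ℂ) * Complex.I := by
      apply Complex.ext
      · simp [h0]
      · simp
    set t : ℝ := u.im with ht_def
    have hsq : (z - 1) ^ 2 + 4 * (α : ℂ) ^ 2 * z = -(t : ℂ) ^ 2 * (z + 1) ^ 2 := by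
      rw [← hr_sq z hz, hu, huI]
      linear_combination ((t : ℂ) ^ 2 * (z + 1) ^ 2) * Complex.I_sq
    have h1t : (0 : ℝ) < 1 + t ^ 2 := by positivity
    set b : ℝ := (4 * α ^ 2 - 2 + 2 * t ^ 2) / (1 + t ^ 2) with hb_def
    have hb2 : |b| < 2 := by
      rw [abs_lt, hb_def]
      constructor
      · rw [lt_div_iff₀ h1t]; nlinarith
      · rw [div_lt_iff₀ h1t]; nlinarith
    have hbeR : b * (1 + t ^ 2) = 4 * α ^ 2 - 2 + 2 * t ^ 2 := by
      rw [hb_def]; field_simp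
    have hbe : (b : ℂ) * ((1 : ℂ) + (t : ℂ) ^ 2) = 4 * (α : ℂ) ^ 2 - 2 + 2 * (t : ℂ) ^ 2 := by
      exact_mod_cast congrArg (fun x : ℝ => (x : ℂ)) hbeR
    have hkey : ((1 : ℂ) + (t : ℂ) ^ 2) * (z ^ 2 + (b : ℂ) * z + 1) = 0 := by
      linear_combination hsq + z * hbe
    have h1tC : ((1 : ℂ) + (t : ℂ) ^ 2) ≠ 0 := by
      intro h
      have h' : ((1 + t ^ 2 : ℝ) : ℂ) = 0 := by push_cast; linear_combination h
      have h'' : (1 + t ^ 2 : ℝ) = 0 := by exact_mod_cast h'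
      linarith
    exact quad_ne b hb2 z (habs z hz) ((mul_eq_zero.mp hkey).resolve_left h1tC)
  -- positivity of Re (r z / (z+1)) by connectedness
  have hgpos : ∀ z ∈ S, 0 < (r z / (z + 1)).re := by
    have hgc : ContinuousOn (fun z => (r z / (z + 1)).re) S := by
      apply Complex.continuous_re.comp_continuousOn
      exact hr_cont.div (by fun_prop) (fun z hz => hz1 z hz)
    have h0S : (0 : ℂ) ∈ S := by simp [hS_def]
    have hg0 : (r 0 / (0 + 1)).re = 1 := by simp [hr0]
    intro z hz
    rcases lt_or_gt_of_ne (hgne z hz) with hneg | hpos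
    · exfalso
      have hpc : IsPreconnected S := (convex_ball (0 : ℂ) 1).isPreconnected
      have himg : IsPreconnected ((fun z => (r z / (z + 1)).re) '' S) := hpc.image _ hgc
      have h0mem : (0 : ℝ) ∈ (fun z => (r z / (z + 1)).re) '' S := by
        have := himg.ordConnected.out (Set.mem_image_of_mem _ hz)
          (Set.mem_image_of_mem _ h0S)
        exact this ⟨hneg.le, by rw [hg0]; norm_num⟩
      obtain ⟨w, hwS, hw⟩ := h0mem
      exact hgne w hwS hw
    · exact hpos
  -- |λ₋| < |λ₊|
  have hlam : ∀ z ∈ S,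
      Complex.abs ((z + 1 - r z) / 2) < Complex.abs ((z + 1 + r z) / 2) := by
    intro z hz
    rw [map_div₀, map_div₀]
    have h := abs_sub_lt_abs_add (z + 1) (r z) (hz1 z hz) (hgpos z hz)
    have h2 : (0 : ℝ) < Complex.abs 2 := by norm_num
    exact div_lt_div_of_pos_right h h2
  have hlp : ∀ z ∈ S, (z + 1 + r z) / 2 ≠ 0 := by
    intro z hz
    have := (Complex.abs.nonneg ((z + 1 - r z) / 2)).trans_lt (hlam z hz)
    exact fun h => by simp [h] at this
  -- denominator r z + 1 - z ≠ 0
  have hden1 : ∀ z ∈ S, r z + 1 - z ≠ 0 := by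
    intro z hz h0
    have h4 : 4 * (α : ℂ) ^ 2 * z = 0 := by
      linear_combination (r z + z - 1) * h0 - hr_sq z hz
    have hz0 : z = 0 := by
      rcases mul_eq_zero.mp h4 with h | h
      · exfalso
        rcases mul_eq_zero.mp h with h | h
        · norm_num at h
        · exact ha0 (pow_eq_zero_iff two_ne_zero |>.mp h)
      · exact h
    rw [hz0, hr0] at h0
    norm_num at h0
  -- C ≠ 0 on S
  have hCne : ∀ z ∈ S, gerC (α : ℂ) r z ≠ 0 := by
    intro z hz h0
    unfold gerC at h0
    have hq : 4 * (α : ℂ) * z * (z - 1) * (1 + (α : ℂ)) = 0 := by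
      linear_combination hr_sq z hz - (r z + z + 2 * (α : ℂ) * z - 1) * h0
    have h1a : (1 : ℂ) + (α : ℂ) ≠ 0 := by
      intro h
      have : ((1 + α : ℝ) : ℂ) = 0 := by push_cast; linear_combination h
      have : (1 + α : ℝ) = 0 := by exact_mod_cast this
      linarith
    have hz01 : z = 0 ∨ z = 1 := by
      rcases mul_eq_zero.mp hq with h | h
      · rcases mul_eq_zero.mp h with h | h
        · rcases mul_eq_zero.mp h with h | h
          · exfalso; rcases mul_eq_zero.mp h with h | h
            · norm_num at h
            · exact ha0 h
          · exact Or.inl h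
        · right; linear_combination h
      · exact absurd h h1a
    rcases hz01 with h | h
    · rw [h, hr0] at h0; norm_num at h0
    · rw [h] at hz; have := habs _ hz; simp at this
  -- the limit equals A/C
  have htarget : ∀ z ∈ S, -2 * (α : ℂ) / (r z + 1 - z) = gerA (α : ℂ) r z / gerC (α : ℂ) r z := by
    intro z hz
    rw [div_eq_div_iff (hden1 z hz) (hCne z hz)]
    unfold gerA gerC
    linear_combination -(hr_sq z hz)
  -- ratio formula
  have hratio : ∀ z ∈ S, ∀ n : ℕ,
      (geronimusPhi (α : ℂ) (n + 1)).1 z / (geronimusPhi (α : ℂ) (n + 1)).2 z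
        = (gerA (α : ℂ) r z + gerB (α : ℂ) r z * gerEps r z ^ (n + 1))
            / (gerC (α : ℂ) r z + gerD (α : ℂ) r z * gerEps r z ^ (n + 1)) := by
    intro z hz n
    obtain ⟨e1, e2⟩ := geronimus_closed (α : ℂ) r z (hr_sq z hz) (n + 1)
    have hR : (2 : ℂ) * r z ≠ 0 := mul_ne_zero two_ne_zero (hrne z hz)
    have hlpz : (z + 1 + r z) / 2 ≠ 0 := hlp z hz
    have hlm : (z + 1 - r z) / 2 = gerEps r z * ((z + 1 + r z) / 2) := by
      unfold gerEps
      rw [div_mul_cancel₀ _ hlpz]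
    have eN : 2 * r z * (geronimusPhi (α : ℂ) (n + 1)).1 z
        = (gerA (α : ℂ) r z + gerB (α : ℂ) r z * gerEps r z ^ (n + 1))
            * ((z + 1 + r z) / 2) ^ (n + 1) := by
      rw [e1, hlm, mul_pow]; ring
    have eD : 2 * r z * (geronimusPhi (α : ℂ) (n + 1)).2 z
        = (gerC (α : ℂ) r z + gerD (α : ℂ) r z * gerEps r z ^ (n + 1))
            * ((z + 1 + r z) / 2) ^ (n + 1) := by
      rw [e2, hlm, mul_pow]; ring
    rw [← mul_div_mul_left ((geronimusPhi (α : ℂ) (n + 1)).1 z)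
      ((geronimusPhi (α : ℂ) (n + 1)).2 z) hR, eN, eD,
      mul_div_mul_right _ _ (pow_ne_zero _ hlpz)]
  -- main convergence
  rw [tendstoLocallyUniformlyOn_iff_forall_isCompact Metric.isOpen_ball]
  intro K hK hKc
  rcases K.eq_empty_or_nonempty with rfl | hne
  · simp [Metric.tendstoUniformlyOn_iff]
  have hrK : ContinuousOn r K := hr_cont.mono hK
  have hcnum : ContinuousOn (fun z : ℂ => (z + 1 - r z) / 2) K :=
    (ContinuousOn.sub (by fun_prop) hrK).div_const 2
  have hcden : ContinuousOn (fun z : ℂ => (z + 1 + r z) / 2) K :=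
    (ContinuousOn.add (by fun_prop) hrK).div_const 2
  have hceps : ContinuousOn (gerEps r) K :=
    hcnum.div hcden (fun z hz => hlp z (hK hz))
  have habseps : ContinuousOn (fun z => Complex.abs (gerEps r z)) K :=
    Complex.continuous_abs.comp_continuousOn hceps
  obtain ⟨zq, hzqK, hqmax'⟩ := hKc.exists_isMaxOn hne habseps
  have hqmax := isMaxOn_iff.mp hqmax'
  set q := Complex.abs (gerEps r zq) with hq_def
  have hq0 : 0 ≤ q := Complex.abs.nonneg _
  have hq1 : q < 1 := by
    rw [hq_def]
    unfold gerEps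
    rw [map_div₀, div_lt_one]
    · exact hlam zq (hK hzqK)
    · exact (Complex.abs.nonneg _).trans_lt (hlam zq (hK hzqK))
  have hcC : ContinuousOn (fun z => Complex.abs (gerC (α : ℂ) r z)) K := by
    apply Complex.continuous_abs.comp_continuousOn
    unfold gerC
    exact ((hrK.add (by fun_prop)).sub (by fun_prop)).sub (by fun_prop)
  obtain ⟨zc, hzcK, hcmin'⟩ := hKc.exists_isMinOn hne hcC
  have hcmin := isMinOn_iff.mp hcmin'
  set c := Complex.abs (gerC (α : ℂ) r zc) with hc_def
  have hc0 : 0 < c := by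
    rw [hc_def]
    exact Complex.abs.pos (hCne zc (hK hzcK))
  have hcD : ContinuousOn (fun z => Complex.abs (gerD (α : ℂ) r z)) K := by
    apply Complex.continuous_abs.comp_continuousOn
    unfold gerD
    exact ((hrK.sub (by fun_prop)).add (by fun_prop)).add (by fun_prop)
  obtain ⟨zD, hzDK, hDmax'⟩ := hKc.exists_isMaxOn hne hcD
  have hDmax := isMaxOn_iff.mp hDmax'
  set MD := Complex.abs (gerD (α : ℂ) r zD) with hMD_def
  have hMD0 : 0 ≤ MD := Complex.abs.nonneg _
  have hcN : ContinuousOn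
      (fun z => Complex.abs (gerA (α : ℂ) r z * gerD (α : ℂ) r z
        - gerC (α : ℂ) r z * gerB (α : ℂ) r z)) K := by
    apply Complex.continuous_abs.comp_continuousOn
    unfold gerA gerB gerC gerD
    apply ContinuousOn.sub <;> apply ContinuousOn.mul
    · exact ((hrK.add (by fun_prop)).sub (by fun_prop)).sub (by fun_prop)
    · exact ((hrK.sub (by fun_prop)).add (by fun_prop)).add (by fun_prop)
    · exact ((hrK.add (by fun_prop)).sub (by fun_prop)).sub (by fun_prop)
    · exact ((hrK.sub (by fun_prop)).add (by fun_prop)).add (by fun_prop)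
  obtain ⟨zN, hzNK, hNmax'⟩ := hKc.exists_isMaxOn hne hcN
  have hNmax := isMaxOn_iff.mp hNmax'
  set MN := Complex.abs (gerA (α : ℂ) r zN * gerD (α : ℂ) r zN
    - gerC (α : ℂ) r zN * gerB (α : ℂ) r zN) with hMN_def
  have hMN0 : 0 ≤ MN := Complex.abs.nonneg _
  rw [Metric.tendstoUniformlyOn_iff]
  intro δ hδ
  have ht0 : Filter.Tendsto (fun n : ℕ => q ^ n) Filter.atTop (nhds 0) :=
    tendsto_pow_atTop_nhds_zero_of_lt_one hq0 hq1
  have h1 : ∀ᶠ n in Filter.atTop, MD * q ^ n < c / 2 := by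
    have h := ht0.const_mul MD
    rw [mul_zero] at h
    exact h.eventually_lt_const (by positivity)
  have h2 : ∀ᶠ n in Filter.atTop, MN * q ^ n < δ * (c * (c / 2)) := by
    have h := ht0.const_mul MN
    rw [mul_zero] at h
    exact h.eventually_lt_const (by positivity)
  filter_upwards [h1, h2] with n hn1 hn2
  intro z hzK
  have hzS : z ∈ S := hK hzK
  set e := gerEps r z ^ (n + 1) with he_def
  have habse : Complex.abs e ≤ q ^ n := by
    rw [he_def, map_pow]
    calc Complex.abs (gerEps r z) ^ (n + 1) ≤ q ^ (n + 1) :=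
          pow_le_pow_left₀ (Complex.abs.nonneg _) (hqmax z hzK) (n + 1)
      _ ≤ q ^ n := pow_le_pow_of_le_one hq0 hq1.le (Nat.le_succ n)
  have hDe : Complex.abs (gerD (α : ℂ) r z * e) ≤ MD * q ^ n := by
    rw [map_mul]
    exact mul_le_mul (hDmax z hzK) habse (Complex.abs.nonneg _) hMD0
  have hCabs : c ≤ Complex.abs (gerC (α : ℂ) r z) := hcmin z hzK
  have htri : Complex.abs (gerC (α : ℂ) r z)
      ≤ Complex.abs (gerC (α : ℂ) r z + gerD (α : ℂ) r z * e)
        + Complex.abs (gerD (α : ℂ) r z * e) := by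
    have := Complex.abs.add_le (gerC (α : ℂ) r z + gerD (α : ℂ) r z * e)
      (-(gerD (α : ℂ) r z * e))
    simpa using this
  have hdenlb : c / 2 ≤ Complex.abs (gerC (α : ℂ) r z + gerD (α : ℂ) r z * e) := by
    linarith
  have hdenne : gerC (α : ℂ) r z + gerD (α : ℂ) r z * e ≠ 0 := by
    intro h
    rw [h] at hdenlb
    simp at hdenlb
    linarith
  have hCz : gerC (α : ℂ) r z ≠ 0 := hCne z hzS
  rw [hratio z hzS n, Complex.dist_eq, ← he_def]
  have hTF : -2 * (α : ℂ) / (r z + 1 - z)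
      - (gerA (α : ℂ) r z + gerB (α : ℂ) r z * e) / (gerC (α : ℂ) r z + gerD (α : ℂ) r z * e)
      = (gerA (α : ℂ) r z * gerD (α : ℂ) r z - gerC (α : ℂ) r z * gerB (α : ℂ) r z) * e
          / (gerC (α : ℂ) r z * (gerC (α : ℂ) r z + gerD (α : ℂ) r z * e)) := by
    rw [htarget z hzS, div_sub_div _ _ hCz hdenne]
    ring
  rw [hTF, Complex.norm_eq_abs, map_div₀, map_mul, map_mul]
  have hnum : Complex.abs (gerA (α : ℂ) r z * gerD (α : ℂ) r z
      - gerC (α : ℂ) r z * gerB (α : ℂ) r z) * Complex.abs e ≤ MN * q ^ n :=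
    mul_le_mul (hNmax z hzK) habse (Complex.abs.nonneg _) hMN0
  have hdenge : c * (c / 2)
      ≤ Complex.abs (gerC (α : ℂ) r z) * Complex.abs (gerC (α : ℂ) r z + gerD (α : ℂ) r z * e) :=
    mul_le_mul hCabs hdenlb (by positivity) (Complex.abs.nonneg _)
  calc Complex.abs (gerA (α : ℂ) r z * gerD (α : ℂ) r z - gerC (α : ℂ) r z * gerB (α : ℂ) r z)
        * Complex.abs e
        / (Complex.abs (gerC (α : ℂ) r z)
            * Complex.abs (gerC (α : ℂ) r z + gerD (α : ℂ) r z * e))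
      ≤ (MN * q ^ n) / (c * (c / 2)) := by
        apply div_le_div₀ (by positivity) hnum (by positivity) hdenge
    _ < δ := by
        rw [div_lt_iff₀ (by positivity)]
        linarith
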